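/- Let I be an open interval and let p, q, f, y : ℝ → ℝ be such that at every point x of I: f is differentiable with f'(x) = p(x)·f(x); q is differentiable; y is twice differentiable; and y''(x) + p(x)·y'(x) + q(x)·y(x) = 0. Then at every x ∈ I the function x ↦ f(x)·(y'(x)² + q(x)·y(x)²) is differentiable with derivative (f·q)'(x)·y(x)² − f'(x)·y'(x)²; equivalently, ∫ ((f(x)q(x))' y(x)² − f'(x) y'(x)²) dx = f(x)(y'(x)² + q(x) y(x)²). -/

import Mathlib

/-- Energy-type integral: if `f' = p·f`, `q` is differentiable, `y` is twice differentiable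
and `y'' + p·y' + q·y = 0` on `(a,b)`, then
`(f·(y'² + q·y²))' = (f·q)'·y² − f'·y'²` on `(a,b)`, where `(f·q)' = p·f·q + f·q'`
and `f' = p·f`. -/
theorem stmt_1 (a b : ℝ) (p q f y q' y' y'' : ℝ → ℝ)
    (hf : ∀ x ∈ Set.Ioo a b, HasDerivAt f (p x * f x) x)
    (hq : ∀ x ∈ Set.Ioo a b, HasDerivAt q (q' x) x)
    (hy1 : ∀ x ∈ Set.Ioo a b, HasDerivAt y (y' x) x)
    (hy2 : ∀ x ∈ Set.Ioo a b, HasDerivAt y' (y'' x) x)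
    (hode : ∀ x ∈ Set.Ioo a b, y'' x + p x * y' x + q x * y x = 0) :
    ∀ x ∈ Set.Ioo a b,
      HasDerivAt (fun t => f t * (y' t ^ 2 + q t * y t ^ 2))
        ((p x * f x * q x + f x * q' x) * y x ^ 2 - (p x * f x) * y' x ^ 2) x := by
  intro x hx
  have h := ((hf x hx).mul (((hy2 x hx).pow 2).add ((hq x hx).mul ((hy1 x hx).pow 2))))
  refine h.congr_deriv (Eq.symm ?_)
  simp only [Pi.add_apply, Pi.mul_apply, Pi.pow_apply]
  have := hode x hx
  linear_combination (-2 * f x * y' x) * this
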